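/- Let α > 0 and halt, gen ∈ (0,1) satisfy (1−halt) ≤ e^α·gen and halt ≤ e^α·(1−gen). Then for all natural numbers m, ℓ, n with m ≤ ℓ < n: halt·(1−halt)^ℓ ≤ exp(α·(n − m))·(1−halt)^m·(1−gen)·gen^{ℓ−m}. -/
import Mathlib


/-- Case 3 of the length-indistinguishability proof: halting probability versus
generation probability when `m ≤ ℓ < n`. -/
theorem seq_cldp_case3 (α halt gen : ℝ) (hα : 0 < α)
    (hhalt : halt ∈ Set.Ioo (0 : ℝ) 1) (hgen : gen ∈ Set.Ioo (0 : ℝ) 1)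
    (h2 : 1 - halt ≤ Real.exp α * gen)
    (h3 : halt ≤ Real.exp α * (1 - gen))
    (m ℓ n : ℕ) (hmℓ : m ≤ ℓ) (hℓn : ℓ < n) :
    halt * (1 - halt) ^ ℓ
      ≤ Real.exp (α * ((n : ℝ) - (m : ℝ))) * ((1 - halt) ^ m * (1 - gen) * gen ^ (ℓ - m)) := by
  obtain ⟨hh0, hh1⟩ := hhalt
  obtain ⟨hg0, hg1⟩ := hgen
  have h1h : (0:ℝ) ≤ 1 - halt := by linarith
  have hk : m + (ℓ - m) = ℓ := by omega
  have step1 : halt * (1 - halt) ^ ℓ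
      ≤ (Real.exp α * (1 - gen)) * ((1 - halt) ^ m * (Real.exp α * gen) ^ (ℓ - m)) := by
    have e1 : halt * (1 - halt) ^ ℓ = halt * ((1 - halt) ^ m * (1 - halt) ^ (ℓ - m)) := by
      rw [← pow_add, hk]
    rw [e1]
    have hexpg : (0:ℝ) ≤ Real.exp α * (1 - gen) := by
      have := Real.exp_pos α; nlinarith
    apply mul_le_mul h3 _ (mul_nonneg (pow_nonneg h1h _) (pow_nonneg h1h _)) hexpg
    exact mul_le_mul_of_nonneg_left (pow_le_pow_left₀ h1h h2 _) (pow_nonneg h1h _)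
  have step2 : (Real.exp α * (1 - gen)) * ((1 - halt) ^ m * (Real.exp α * gen) ^ (ℓ - m))
      = Real.exp (α * ((ℓ - m : ℕ) + 1)) * ((1 - halt) ^ m * (1 - gen) * gen ^ (ℓ - m)) := by
    rw [mul_pow, ← Real.exp_nat_mul, mul_add, Real.exp_add, mul_comm ((ℓ - m : ℕ):ℝ) α]
    ring
  have step3 : Real.exp (α * ((ℓ - m : ℕ) + 1)) ≤ Real.exp (α * ((n : ℝ) - (m : ℝ))) := by
    apply Real.exp_le_exp.mpr
    have : ((ℓ - m : ℕ) : ℝ) + 1 ≤ (n : ℝ) - (m : ℝ) := by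
      have : (ℓ - m : ℕ) = ℓ - m := rfl
      push_cast [Nat.cast_sub hmℓ]
      have := hℓn
      have : (ℓ:ℝ) + 1 ≤ n := by exact_mod_cast Nat.succ_le_of_lt hℓn
      linarith
    nlinarith
  calc halt * (1 - halt) ^ ℓ
      ≤ (Real.exp α * (1 - gen)) * ((1 - halt) ^ m * (Real.exp α * gen) ^ (ℓ - m)) := step1
    _ = Real.exp (α * ((ℓ - m : ℕ) + 1)) * ((1 - halt) ^ m * (1 - gen) * gen ^ (ℓ - m)) := step2
    _ ≤ Real.exp (α * ((n : ℝ) - (m : ℝ))) * ((1 - halt) ^ m * (1 - gen) * gen ^ (ℓ - m)) := by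
        apply mul_le_mul_of_nonneg_right step3
        exact mul_nonneg (mul_nonneg (pow_nonneg h1h _) (by linarith)) (pow_nonneg hg0.le _)
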